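/- Suppose the coefficient functions b̄₁ and b₁ are even, c₁ = 1/2, and for ν ∈ {0, hω} one has cos(ν/2) ≠ 0 and (1 + cos ν)·b̄₁(ν) = sinc(ν)·b₁(ν) (the symmetry condition). Then for every continuous g : ℝ^d → ℝ^d the one-stage explicit ERKN integrator is symmetric, i.e. for every (q,p) ∈ ℝ^d × ℝ^d one has Φ_{−h}(Φ_h(q,p)) = (q,p), where Φ_{−h} denotes the same scheme with the stepsize h replaced by −h. -/

import Mathlib

noncomputable section

/-- The (unnormalized) sinc function: `sinc x = sin x / x` for `x ≠ 0`, `sinc 0 = 1`. -/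
def rsinc (x : ℝ) : ℝ := if x = 0 then 1 else Real.sin x / x

/-- Real coordinate space `ℝ^d` with the Euclidean norm. -/
abbrev Vec (d : ℕ) : Type := EuclideanSpace ℝ (Fin d)

/-- Block-diagonal scalar operator: multiplies the first `d₁` coordinates by `a`
and the remaining `d₂` coordinates by `b`.  This realizes `f(hΩ)` for
`Ω = diag(0·I_{d₁}, ω·I_{d₂})`, with `a = f 0` and `b = f (hω)`. -/
def bop (d₁ d₂ : ℕ) (a b : ℝ) (v : Vec (d₁ + d₂)) : Vec (d₁ + d₂) :=
  WithLp.toLp 2 (fun i : Fin (d₁ + d₂) => (if (i : ℕ) < d₁ then a else b) * v i)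

/-- One-stage explicit ERKN integrator `Φ_h` for `q'' + Ω²q = g(q)`:
`Q = cos(c₁hΩ)q + c₁h·sinc(c₁hΩ)p`,
`q⁺ = cos(hΩ)q + h·sinc(hΩ)p + h²·b̄₁(hΩ)g(Q)`,
`p⁺ = −hΩ²·sinc(hΩ)q + cos(hΩ)p + h·b₁(hΩ)g(Q)`. -/
def erkn (d₁ d₂ : ℕ) (h ω c₁ : ℝ) (bbar b₁ : ℝ → ℝ)
    (g : Vec (d₁ + d₂) → Vec (d₁ + d₂)) (x : Vec (d₁ + d₂) × Vec (d₁ + d₂)) :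
    Vec (d₁ + d₂) × Vec (d₁ + d₂) :=
  let q := x.1
  let p := x.2
  let Q := bop d₁ d₂ (Real.cos (c₁ * (h * 0))) (Real.cos (c₁ * (h * ω))) q
         + bop d₁ d₂ (c₁ * h * rsinc (c₁ * (h * 0))) (c₁ * h * rsinc (c₁ * (h * ω))) p
  ( bop d₁ d₂ (Real.cos (h * 0)) (Real.cos (h * ω)) q
    + bop d₁ d₂ (h * rsinc (h * 0)) (h * rsinc (h * ω)) p
    + bop d₁ d₂ (h ^ 2 * bbar (h * 0)) (h ^ 2 * bbar (h * ω)) (g Q),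
    bop d₁ d₂ (-(h * 0 ^ 2 * rsinc (h * 0))) (-(h * ω ^ 2 * rsinc (h * ω))) q
    + bop d₁ d₂ (Real.cos (h * 0)) (Real.cos (h * ω)) p
    + bop d₁ d₂ (h * b₁ (h * 0)) (h * b₁ (h * ω)) (g Q) )

/-! ### Auxiliary lemmas -/

lemma rsinc_neg (x : ℝ) : rsinc (-x) = rsinc x := by
  unfold rsinc
  rcases eq_or_ne x 0 with rfl | hx
  · simp
  · simp [hx, neg_ne_zero.mpr hx, Real.sin_neg, neg_div_neg_eq]

lemma mul_rsinc (x : ℝ) : x * rsinc x = Real.sin x := by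
  rcases eq_or_ne x 0 with rfl | hx
  · simp
  · rw [rsinc, if_neg hx]; field_simp

lemma cos_eq_half (x : ℝ) : Real.cos x = 2 * (Real.cos ((1/2)*x))^2 - 1 := by
  rw [show x = 2*((1/2)*x) by ring, Real.cos_two_mul]
  ring_nf

lemma rsinc_eq_half (x : ℝ) : rsinc x = Real.cos ((1/2)*x) * rsinc ((1/2)*x) := by
  rcases eq_or_ne x 0 with rfl | hx
  · simp [rsinc]
  · have h2 : (1/2)*x ≠ 0 := by simpa using hx
    unfold rsinc
    simp only [hx, h2, if_false]
    have hs : Real.sin x = 2 * Real.sin ((1/2)*x) * Real.cos ((1/2)*x) := by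
      have h := Real.sin_two_mul ((1/2)*x)
      rw [show 2*((1/2)*x) = x by ring] at h
      linarith
    rw [hs]
    field_simp

lemma sq_rsinc_half (x : ℝ) : x^2 * (rsinc ((1/2)*x))^2 = 4*(1 - (Real.cos ((1/2)*x))^2) := by
  have h1 : ((1/2)*x) * rsinc ((1/2)*x) = Real.sin ((1/2)*x) := mul_rsinc _
  have h2 : Real.sin ((1/2)*x)^2 = 1 - Real.cos ((1/2)*x)^2 := by
    have := Real.sin_sq_add_cos_sq ((1/2)*x); linarith

  linear_combination (4*((1/2)*x*rsinc ((1/2)*x)) + 4*Real.sin ((1/2)*x))*h1 + 4*h2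

section
variable (A S h ω Bb B1 q p G : ℝ)

lemma keyQ (h1 : (h*ω)^2 * S^2 = 4*(1-A^2)) (h2 : 2*A*Bb = S*B1) :
    A * ((2*A^2-1)*q + h*(A*S)*p + h^2*Bb*G)
      + (1/2)*(-h)*S * (-(h*ω^2*(A*S))*q + (2*A^2-1)*p + h*B1*G)
    = A*q + (1/2)*h*S*p := by
  linear_combination (q*A/2)*h1 + (h^2/2)*G*h2

lemma keyq (h1 : (h*ω)^2 * S^2 = 4*(1-A^2)) (h2 : 2*A*Bb = S*B1) :
    (2*A^2-1) * ((2*A^2-1)*q + h*(A*S)*p + h^2*Bb*G)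
      + (-h)*(A*S) * (-(h*ω^2*(A*S))*q + (2*A^2-1)*p + h*B1*G)
      + h^2*Bb*G = q := by
  linear_combination (q*A^2)*h1 + (h^2*A)*G*h2

lemma keyp (h1 : (h*ω)^2 * S^2 = 4*(1-A^2)) (h2 : 2*A*Bb = S*B1) :
    (h*ω^2*(A*S)) * ((2*A^2-1)*q + h*(A*S)*p + h^2*Bb*G)
      + (2*A^2-1) * (-(h*ω^2*(A*S))*q + (2*A^2-1)*p + h*B1*G)
      + (-h)*B1*G = p := by
  linear_combination (p*A^2 + G*h*B1/2)*h1 + (G*h^3*ω^2*S/2)*h2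

end

/-- Under the symmetry condition, the one-stage explicit ERKN
integrator is symmetric: `Φ_{−h} ∘ Φ_h = id`. -/
theorem erkn_symmetric (d₁ d₂ : ℕ) (h ω : ℝ) (hh : 0 < h) (hω : 0 < ω)
    (bbar b₁ : ℝ → ℝ)
    (hbbar_even : ∀ ν : ℝ, bbar (-ν) = bbar ν) (hb₁_even : ∀ ν : ℝ, b₁ (-ν) = b₁ ν)
    (hcos : ∀ ν ∈ ({0, h * ω} : Set ℝ), Real.cos (ν / 2) ≠ 0)
    (hsym : ∀ ν ∈ ({0, h * ω} : Set ℝ), (1 + Real.cos ν) * bbar ν = rsinc ν * b₁ ν)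
    (g : Vec (d₁ + d₂) → Vec (d₁ + d₂)) (hg : Continuous g)
    (q p : Vec (d₁ + d₂)) :
    erkn d₁ d₂ (-h) ω (1/2) bbar b₁ g (erkn d₁ d₂ h ω (1/2) bbar b₁ g (q, p)) = (q, p) := by
  -- preliminary scalar facts
  have hA2 : Real.cos ((1/2)*(h*ω)) ≠ 0 := by
    have := hcos (h*ω) (by simp)
    rwa [show (h*ω)/2 = (1/2)*(h*ω) by ring] at this
  have h1_0 : (h*(0:ℝ))^2*(rsinc 0)^2 = 4*(1-(1:ℝ)^2) := by norm_num
  have h2_0 : 2*(1:ℝ)*bbar 0 = rsinc 0 * b₁ 0 := by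
    have hs0 := hsym 0 (by simp)
    rw [Real.cos_zero] at hs0
    linarith
  have h1_ω : (h*ω)^2*(rsinc ((1/2)*(h*ω)))^2 = 4*(1-(Real.cos ((1/2)*(h*ω)))^2) :=
    sq_rsinc_half (h*ω)
  have h2_ω : 2*Real.cos ((1/2)*(h*ω))*bbar (h*ω)
      = rsinc ((1/2)*(h*ω)) * b₁ (h*ω) := by
    have hsω := hsym (h*ω) (by simp)
    rw [cos_eq_half (h*ω), rsinc_eq_half (h*ω)] at hsω
    refine mul_left_cancel₀ hA2 ?_
    linear_combination hsω
  simp only [erkn, mul_zero, neg_zero, neg_mul, mul_neg, neg_neg, Real.cos_neg, rsinc_neg,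
    hbbar_even, hb₁_even, Real.cos_zero, even_two, Even.neg_pow]
  set Q1 : Vec (d₁+d₂) := bop d₁ d₂ 1 (Real.cos (1/2*(h*ω))) q
      + bop d₁ d₂ (1/2*h*rsinc 0) (1/2*h*rsinc (1/2*(h*ω))) p with hQ1def
  set G1 : Vec (d₁+d₂) := g Q1 with hG1def
  -- the internal stage of the backward step coincides with the forward one
  have hQ : bop d₁ d₂ 1 (Real.cos (1/2*(h*ω)))
        (bop d₁ d₂ 1 (Real.cos (h*ω)) q + bop d₁ d₂ (h*rsinc 0) (h*rsinc (h*ω)) p +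
          bop d₁ d₂ (h^2*bbar 0) (h^2*bbar (h*ω)) G1) +
      bop d₁ d₂ (-(1/2*h*rsinc 0)) (-(1/2*h*rsinc (1/2*(h*ω))))
        (bop d₁ d₂ (-(h*0^2*rsinc 0)) (-(h*ω^2*rsinc (h*ω))) q +
          bop d₁ d₂ 1 (Real.cos (h*ω)) p +
          bop d₁ d₂ (h*b₁ 0) (h*b₁ (h*ω)) G1) = Q1 := by
    rw [hQ1def]
    ext i
    simp only [bop, PiLp.add_apply, PiLp.toLp_apply]
    by_cases hi : (i : ℕ) < d₁
    · simp only [hi, if_true]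
      linear_combination keyQ 1 (rsinc 0) h 0 (bbar 0) (b₁ 0) (q i) (p i) (G1 i) h1_0 h2_0
    · simp only [hi, if_false]
      rw [cos_eq_half (h*ω), rsinc_eq_half (h*ω)]
      linear_combination keyQ (Real.cos ((1/2)*(h*ω))) (rsinc ((1/2)*(h*ω))) h ω
        (bbar (h*ω)) (b₁ (h*ω)) (q i) (p i) (G1 i) h1_ω h2_ω
  rw [hQ, ← hG1def]
  rw [Prod.mk.injEq]
  constructor
  · ext i
    simp only [bop, PiLp.add_apply, PiLp.toLp_apply]
    by_cases hi : (i : ℕ) < d₁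
    · simp only [hi, if_true]
      linear_combination keyq 1 (rsinc 0) h 0 (bbar 0) (b₁ 0) (q i) (p i) (G1 i) h1_0 h2_0
    · simp only [hi, if_false]
      rw [cos_eq_half (h*ω), rsinc_eq_half (h*ω)]
      linear_combination keyq (Real.cos ((1/2)*(h*ω))) (rsinc ((1/2)*(h*ω))) h ω
        (bbar (h*ω)) (b₁ (h*ω)) (q i) (p i) (G1 i) h1_ω h2_ω
  · ext i
    simp only [bop, PiLp.add_apply, PiLp.toLp_apply]
    by_cases hi : (i : ℕ) < d₁
    · simp only [hi, if_true]
      linear_combination keyp 1 (rsinc 0) h 0 (bbar 0) (b₁ 0) (q i) (p i) (G1 i) h1_0 h2_0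
    · simp only [hi, if_false]
      rw [cos_eq_half (h*ω), rsinc_eq_half (h*ω)]
      linear_combination keyp (Real.cos ((1/2)*(h*ω))) (rsinc ((1/2)*(h*ω))) h ω
        (bbar (h*ω)) (b₁ (h*ω)) (q i) (p i) (G1 i) h1_ω h2_ω
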